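/- arXiv:math/0501243 — 2 statements merged into one kernel-verified Lean document; each statement's English description precedes it below -/
import Mathlib

section
/- With Φ, p, ε_p, Φ_p = Φ(ε_p), m = [Φ_p:Φ], φ, s, and V_i as above, let β ∈ Φ_p* \ Φ_p*^p and let L = Φ_p(η_p) where η_p^p = β. Then L/Φ is a Galois extension if and only if β ∈ V_j for some index j. -/
open IntermediateField Polynomial

section AuxLemmas

lemma aux_fixed_mem_range {K L : Type*} [Field K] [Field L] [Algebra K L]
    [FiniteDimensional K L] [IsGalois K L] {x : L}
    (h : ∀ g : L ≃ₐ[K] L, g x = x) : ∃ y : K, algebraMap K L y = x := by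
  have h1 : (⊥ : IntermediateField K L) = fixedField ⊤ := by
    rw [← IsGalois.fixedField_fixingSubgroup (⊥ : IntermediateField K L)]
    congr 1
    ext g
    simp only [Subgroup.mem_top, iff_true]
    rw [IntermediateField.fixingSubgroup, mem_fixingSubgroup_iff]
    intro x hx
    obtain ⟨y, rfl⟩ := IntermediateField.mem_bot.1 hx
    exact g.commutes y
  have hx : x ∈ (⊥ : IntermediateField K L) := by
    rw [h1]
    rintro ⟨g, -⟩
    exact h g
  exact IntermediateField.mem_bot.1 hx

lemma aux_dvd_of_pow_eq_pow {K : Type*} [Field K] {p : ℕ} (hp : p.Prime) {β : K} (hβ : β ≠ 0)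
    (hβnp : ∀ γ : K, γ ^ p ≠ β) {e : ℕ} {c : K} (hc : β ^ e = c ^ p) : p ∣ e := by
  by_contra hpe
  have he : e ≠ 0 := fun h => hpe (h ▸ dvd_zero p)
  have hcop : Nat.Coprime e p := Nat.Coprime.symm ((Nat.Prime.coprime_iff_not_dvd hp).mpr hpe)
  obtain ⟨u, -, hu⟩ := Nat.exists_mul_mod_eq_one_of_coprime hcop hp.one_lt
  have hdm := Nat.div_add_mod (e * u) p
  set q := e * u / p with hq
  have heu : e * u = p * q + 1 := by omega
  have hc0 : c ≠ 0 := by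
    intro h0
    rw [h0, zero_pow hp.ne_zero, pow_eq_zero_iff he] at hc
    exact hβ hc
  have h1 : (c ^ u) ^ p = β ^ (p * q + 1) := by
    rw [← pow_mul, mul_comm u p, pow_mul, ← hc, ← pow_mul, ← heu]
  have h2 : ((c ^ u) * (β ^ q)⁻¹) ^ p = β := by
    have hb : β ^ (p * q) ≠ 0 := pow_ne_zero _ hβ
    calc ((c ^ u) * (β ^ q)⁻¹) ^ p = (c ^ u) ^ p * ((β ^ q) ^ p)⁻¹ := by rw [mul_pow, inv_pow]
      _ = β ^ (p * q) * β * (β ^ (p * q))⁻¹ := by rw [h1, pow_succ, ← pow_mul, mul_comm q p]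
      _ = β := by field_simp
  exact hβnp _ h2

lemma aux_fixed_zpow {K L : Type*} [Field K] [Field L] [Algebra K L] (ψ : L ≃ₐ[K] L) {x : L}
    (h : ψ x = x) (z : ℤ) : (ψ ^ z) x = x := by
  have hn : ∀ n : ℕ, (ψ ^ n) x = x := by
    intro n
    induction n with
    | zero => rfl
    | succ n ih => rw [pow_succ, AlgEquiv.mul_apply, h, ih]
  induction z using Int.rec with
  | ofNat n => simpa using hn n
  | negSucc n =>
    rw [zpow_negSucc]
    show (ψ ^ (n+1)).symm x = x
    exact (AlgEquiv.symm_apply_eq _).2 (hn (n+1)).symm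

lemma aux_fixed_pow {K L : Type*} [Field K] [Field L] [Algebra K L] (ψ : L ≃ₐ[K] L) {x : L}
    (h : ψ x = x) (n : ℕ) : (ψ ^ n) x = x := by
  have := aux_fixed_zpow ψ h (n : ℤ)
  rwa [zpow_natCast] at this

lemma aux_eq_one_of_fix_gen {K F : Type*} [Field K] [Field F] [Algebra K F]
    [FiniteDimensional K F] [IsGalois K F] {ε : F}
    (hgen : IntermediateField.adjoin K {ε} = ⊤) {ψ : F ≃ₐ[K] F} (h : ψ ε = ε) : ψ = 1 := by
  have hle : IntermediateField.adjoin K {ε} ≤ fixedField (Subgroup.zpowers ψ) := by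
    rw [IntermediateField.adjoin_le_iff]
    rintro y hy
    rcases Set.mem_singleton_iff.1 hy with rfl
    rintro ⟨g, hg⟩
    obtain ⟨z, rfl⟩ := Subgroup.mem_zpowers_iff.1 hg
    exact aux_fixed_zpow ψ h z
  have hff : fixedField (Subgroup.zpowers ψ) = ⊤ := top_unique (hgen ▸ hle)
  have hfix := IntermediateField.fixingSubgroup_fixedField (Subgroup.zpowers ψ)
  rw [hff] at hfix
  have hψ : ψ ∈ IntermediateField.fixingSubgroup (⊤ : IntermediateField K F) :=
    hfix ▸ Subgroup.mem_zpowers ψ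
  rw [IntermediateField.fixingSubgroup, mem_fixingSubgroup_iff] at hψ
  exact AlgEquiv.ext fun x => hψ x trivial

lemma aux_iter {K F : Type*} [Field K] [Field F] [Algebra K F] (ψ : F ≃ₐ[K] F)
    {β γ : F} {t p : ℕ} (hγ : γ ≠ 0) (h : ψ β = β ^ t * γ ^ p) :
    ∀ k : ℕ, ∃ d : F, d ≠ 0 ∧ (ψ ^ k) β = β ^ (t ^ k) * d ^ p := by
  intro k
  induction k with
  | zero => exact ⟨1, one_ne_zero, by simp⟩
  | succ k ih =>
    obtain ⟨d, hd, hk⟩ := ih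
    have hψd : ψ d ≠ 0 := fun h0 => hd (ψ.injective (h0.trans (map_zero (ψ : F ≃ₐ[K] F)).symm))
    refine ⟨γ ^ t ^ k * ψ d, mul_ne_zero (pow_ne_zero _ hγ) hψd, ?_⟩
    rw [pow_succ', AlgEquiv.mul_apply, hk, map_mul, map_pow, map_pow, h, pow_succ t k]
    ring

end AuxLemmas

theorem stmt_15 {Φ F L : Type*} [Field Φ] [Field F] [Field L]
    [Algebra Φ F] [Algebra F L] [Algebra Φ L] [IsScalarTower Φ F L]
    (p : ℕ) (hp : p.Prime) (hchar : ringChar Φ ≠ p)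
    (ε : F) (hε : IsPrimitiveRoot ε p)
    (hFgen : IntermediateField.adjoin Φ {ε} = ⊤)  -- `F = Φ(ε_p)`
    [IsGalois Φ F] (m : ℕ) (hm : Module.finrank Φ F = m) (hmdvd : m ∣ p - 1)
    (φ : F ≃ₐ[Φ] F) (hφgen : ∀ ψ : F ≃ₐ[Φ] F, ψ ∈ Subgroup.zpowers φ)
    (s : ℕ) (hs : φ ε = ε ^ s)
    (β : F) (hβ : β ≠ 0) (hβnp : ∀ γ : F, γ ^ p ≠ β)
    (η : L) (hη : η ^ p = algebraMap F L β)
    (hLgen : IntermediateField.adjoin F {η} = ⊤)  -- `L = Φ_p(η_p)`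
    :
    IsGalois Φ L ↔ ∃ j : ℕ, j < m ∧ ∃ γ : F, γ ≠ 0 ∧ φ β = β ^ (s ^ j) * γ ^ p := by
  classical
  -- basic facts
  have hm0 : m ≠ 0 := by
    rintro rfl
    rw [Nat.zero_dvd] at hmdvd
    have := hp.two_le
    omega
  haveI : NeZero p := ⟨hp.ne_zero⟩
  haveI : NeZero m := ⟨hm0⟩
  haveI : FiniteDimensional Φ F :=
    FiniteDimensional.of_finrank_pos (hm ▸ Nat.pos_of_ne_zero hm0)
  have hεL : IsPrimitiveRoot (algebraMap F L ε) p :=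
    hε.map_of_injective (algebraMap F L).injective
  have hprim : (primitiveRoots p F).Nonempty := ⟨ε, (mem_primitiveRoots hp.pos).mpr hε⟩
  have Hirr : Irreducible (X ^ p - C β) := X_pow_sub_C_irreducible_of_prime hp hβnp
  have hηint : IsIntegral F η :=
    ⟨X ^ p - C β, monic_X_pow_sub_C _ hp.ne_zero, by simp [hη]⟩
  have hmin : minpoly F η = X ^ p - C β := by
    refine (minpoly.eq_of_irreducible_of_monic Hirr ?_ (monic_X_pow_sub_C _ hp.ne_zero)).symm
    simp [hη]
  haveI : FiniteDimensional F L := by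
    have h1 := IntermediateField.adjoin.finiteDimensional hηint
    rw [hLgen] at h1
    exact Module.Finite.equiv (IntermediateField.topEquiv (F := F) (E := L)).toLinearEquiv
  have hd : Module.finrank F L = p := by
    have h1 := IntermediateField.adjoin.finrank hηint
    rw [hLgen, hmin, natDegree_X_pow_sub_C] at h1
    rw [← h1, ← IntermediateField.finrank_top' (F := F) (E := L)]
  haveI hsf : IsSplittingField F L (X ^ p - C β) := by
    have h1 := isSplittingField_X_pow_sub_C_of_root_adjoin_eq_top
      (K := F) (L := L) (by rw [hd]; exact hprim) (a := β) (α := η) (by rw [hd]; exact hη) hLgen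
    rwa [hd] at h1
  haveI hGalFL : IsGalois F L := isGalois_of_isSplittingField_X_pow_sub_C hprim Hirr L
  have hη0 : η ≠ 0 := by
    intro h0
    apply hβ
    have : (0 : L) = algebraMap F L β := by rw [← hη, h0, zero_pow hp.ne_zero]
    exact ((algebraMap F L).injective (by rw [map_zero, this])).symm
  have hε0 : ε ≠ 0 := hε.ne_zero hp.ne_zero
  -- order facts
  have hcard : Nat.card (F ≃ₐ[Φ] F) = m := by
    rw [IsGalois.card_aut_eq_finrank, hm]
  have hφord : orderOf φ = m := by rw [orderOf_eq_card_of_forall_mem_zpowers hφgen, hcard]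
  have hφm : φ ^ m = 1 := by rw [← hφord]; exact pow_orderOf_eq_one φ
  have hφpow : ∀ k : ℕ, (φ ^ k) ε = ε ^ (s ^ k) := by
    intro k
    induction k with
    | zero => simp
    | succ k ih =>
      rw [pow_succ', AlgEquiv.mul_apply, ih, map_pow, hs, ← pow_mul, ← pow_succ']
  have hs0 : s ≠ 0 := by
    intro h0
    have h1 : φ ε = 1 := by rw [hs, h0, pow_zero]
    have h2 : ε = 1 := by
      have := congrArg φ.symm h1
      simpa using this
    exact hε.ne_one hp.one_lt h2
  haveI : FiniteDimensional Φ L := Module.Finite.trans F L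
  constructor
  · intro hGal
    haveI : Normal Φ L := hGal.to_normal
    obtain ⟨τ, hτ⟩ := AlgEquiv.restrictNormalHom_surjective (K₁ := F) L φ
    have hτF : ∀ x : F, τ (algebraMap F L x) = algebraMap F L (φ x) := by
      intro x
      have h1 := AlgEquiv.restrictNormal_commutes τ F x
      rw [show τ.restrictNormal F = φ from hτ] at h1
      exact h1.symm
    set θ := τ η with hθ
    have hφβ0 : φ β ≠ 0 := fun h0 => hβ (by
      have := congrArg φ.symm h0
      simpa using this)
    have haux0 : algebraMap F L (φ β) ≠ 0 :=
      fun h => hφβ0 ((algebraMap F L).injective (h.trans (map_zero _).symm))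
    have hθp : θ ^ p = algebraMap F L (φ β) := by rw [hθ, ← map_pow, hη, hτF]
    have hθ0 : θ ≠ 0 := by
      intro h0
      apply haux0
      rw [← hθp, h0, zero_pow hp.ne_zero]
    set A := autEquivZmod Hirr L hε with hA
    set σ : L ≃ₐ[F] L := A.symm (Multiplicative.ofAdd (1 : ZMod p)) with hσ
    have hση : σ η = algebraMap F L ε * η := by
      have h1 := autEquivZmod_symm_apply_natCast Hirr L hη hε 1
      rw [pow_one, Algebra.smul_def] at h1
      rw [hσ, hA]
      simpa using h1
    have hofAdd : ∀ n : ℕ, (Multiplicative.ofAdd (1 : ZMod p)) ^ n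
        = Multiplicative.ofAdd ((n : ZMod p)) := by
      intro n
      rw [← ofAdd_nsmul]
      simp [nsmul_eq_mul]
    have hσgen : ∀ g : L ≃ₐ[F] L, ∃ k : ℕ, g = σ ^ k := by
      intro g
      refine ⟨(Multiplicative.toAdd (A g)).val, ?_⟩
      apply A.injective
      rw [map_pow, hσ, MulEquiv.apply_symm_apply, hofAdd, ZMod.natCast_val, ZMod.cast_id]
      simp
    have hσθp : (σ θ * θ⁻¹) ^ p = 1 := by
      rw [mul_pow, inv_pow, ← map_pow, hθp, AlgEquiv.commutes, mul_inv_cancel₀ haux0]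
    obtain ⟨a, hap, ha⟩ := hεL.eq_pow_of_pow_eq_one hσθp
    have hσθ : σ θ = (algebraMap F L ε) ^ a * θ := by
      rw [ha, mul_assoc, inv_mul_cancel₀ hθ0, mul_one]
    set u := θ * (η ^ a)⁻¹ with hu
    have hηa0 : (η : L) ^ a ≠ 0 := pow_ne_zero _ hη0
    have hε'0 : algebraMap F L ε ≠ 0 :=
      fun h => hε0 ((algebraMap F L).injective (h.trans (map_zero _).symm))
    have hσu : σ u = u := by
      rw [hu, map_mul, map_inv₀, map_pow, hση, hσθ, mul_pow]
      field_simp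
    have hufix : ∀ g : L ≃ₐ[F] L, g u = u := by
      intro g
      obtain ⟨k, rfl⟩ := hσgen g
      exact aux_fixed_pow σ hσu k
    obtain ⟨w, hw⟩ := aux_fixed_mem_range hufix
    have hw0 : w ≠ 0 := by
      intro h0
      rw [h0, map_zero] at hw
      apply hθ0
      have h2 : θ * (η ^ a)⁻¹ = 0 := by rw [← hu, ← hw]
      rcases mul_eq_zero.1 h2 with h3 | h3
      · exact h3
      · exact absurd (inv_eq_zero.1 h3) hηa0
    have hθeq : θ = algebraMap F L w * η ^ a := by
      rw [hw, hu]
      field_simp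
    have hkeyL : algebraMap F L (φ β) = algebraMap F L (w ^ p * β ^ a) := by
      rw [← hθp, hθeq, mul_pow, ← map_pow, map_mul, map_pow]
      congr 1
      rw [← pow_mul, mul_comm a p, pow_mul, hη, ← map_pow]
    have hkey : φ β = w ^ p * β ^ a := (algebraMap F L).injective hkeyL
    have ha0 : a ≠ 0 := by
      rintro rfl
      rw [pow_zero, mul_one] at hkey
      exact hβnp (φ.symm w) (by rw [← map_pow, ← hkey, AlgEquiv.symm_apply_apply])
    obtain ⟨d, hd, hdm⟩ := aux_iter φ hw0 (by rw [hkey, mul_comm]) m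
    rw [hφm, AlgEquiv.one_apply] at hdm
    have ham1 : 1 ≤ a ^ m := Nat.one_le_iff_ne_zero.2 (pow_ne_zero m ha0)
    have h4 : β ^ (a ^ m - 1) * d ^ p = 1 := by
      apply mul_left_cancel₀ hβ
      rw [mul_one]
      calc β * (β ^ (a ^ m - 1) * d ^ p) = β ^ (a ^ m) * d ^ p := by
            rw [← mul_assoc, ← pow_succ', Nat.sub_add_cancel ham1]
        _ = β := hdm.symm
    have h5 : β ^ (a ^ m - 1) = (d⁻¹) ^ p := by
      rw [inv_pow]
      have h4' : d ^ p * β ^ (a ^ m - 1) = 1 := by rw [mul_comm]; exact h4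
      exact eq_inv_of_mul_eq_one_right h4'
    have hpam : p ∣ a ^ m - 1 := aux_dvd_of_pow_eq_pow hp hβ hβnp h5
    have hsmpow : ∀ k : ℕ, 1 ≤ s ^ k := fun k => Nat.one_le_iff_ne_zero.2 (pow_ne_zero k hs0)
    have hsm : p ∣ s ^ m - 1 := by
      have h6 : ε ^ (s ^ m) = ε := by rw [← hφpow, hφm, AlgEquiv.one_apply]
      have h7 : ε ^ (s ^ m - 1) = 1 := by
        apply mul_right_cancel₀ hε0
        rw [one_mul, ← pow_succ, Nat.sub_add_cancel (hsmpow m), h6]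
      exact (hε.pow_eq_one_iff_dvd _).1 h7
    have hdvd_of : ∀ k : ℕ, p ∣ s ^ k - 1 → m ∣ k := by
      intro k hk
      obtain ⟨c, hc⟩ := hk
      have hsk : s ^ k = p * c + 1 := by
        have := hsmpow k
        omega
      have h8 : (φ ^ k) ε = ε := by
        rw [hφpow, hsk, pow_add, pow_mul, hε.pow_eq_one, one_pow, one_mul, pow_one]
      have h9 : (φ ^ k : F ≃ₐ[Φ] F) = 1 := aux_eq_one_of_fix_gen hFgen h8
      exact hφord ▸ orderOf_dvd_of_pow_eq_one h9
    haveI : Fact p.Prime := ⟨hp⟩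
    have hpa : ¬ p ∣ a := by
      intro hdvd
      have := Nat.le_of_dvd (Nat.pos_of_ne_zero ha0) hdvd
      omega
    have hps : ¬ p ∣ s := by
      intro hdvd
      have h10 : p ∣ s ^ m := dvd_pow hdvd hm0
      have h11 := Nat.dvd_sub h10 hsm
      rw [Nat.sub_sub_self (hsmpow m)] at h11
      exact hp.one_lt.ne' (Nat.dvd_one.1 h11)
    have hscop : Nat.Coprime s p := ((hp.coprime_iff_not_dvd).mpr hps).symm
    have hacop : Nat.Coprime a p := ((hp.coprime_iff_not_dvd).mpr hpa).symm
    set su : (ZMod p)ˣ := ZMod.unitOfCoprime s hscop with hsu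
    set au : (ZMod p)ˣ := ZMod.unitOfCoprime a hacop with hau
    have hcastiff : ∀ e : ℕ, 1 ≤ e → (((e : ℕ) : ZMod p) = 1 ↔ p ∣ e - 1) := by
      intro e he
      rw [show (1 : ZMod p) = ((1 : ℕ) : ZMod p) by simp, ZMod.natCast_eq_natCast_iff]
      constructor
      · intro h; exact (Nat.modEq_iff_dvd' he).1 h.symm
      · intro h; exact ((Nat.modEq_iff_dvd' he).2 h).symm
    have hsupow : ∀ k : ℕ, su ^ k = 1 ↔ ((s ^ k : ℕ) : ZMod p) = 1 := by
      intro k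
      rw [Units.ext_iff, Units.val_pow_eq_pow_val, ZMod.coe_unitOfCoprime, Units.val_one,
        Nat.cast_pow]
    have hsum1 : su ^ m = 1 := (hsupow m).2 ((hcastiff _ (hsmpow m)).2 hsm)
    have hsuord : orderOf su = m := by
      apply Nat.dvd_antisymm
      · exact orderOf_dvd_of_pow_eq_one hsum1
      · apply hdvd_of
        exact (hcastiff _ (hsmpow _)).1 ((hsupow (orderOf su)).1 (pow_orderOf_eq_one su))
    have haum : au ^ m = 1 := by
      rw [Units.ext_iff, Units.val_pow_eq_pow_val, ZMod.coe_unitOfCoprime, Units.val_one,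
        ← Nat.cast_pow]
      exact (hcastiff _ ham1).2 hpam
    have haumem : au ∈ Subgroup.zpowers su := by
      classical
      set T : Finset (ZMod p)ˣ := Finset.univ.filter (fun x => x ^ m = 1) with hTdef
      have hTcard : T.card ≤ m := IsCyclic.card_pow_eq_one_le (Nat.pos_of_ne_zero hm0)
      set HF : Finset (ZMod p)ˣ := Finset.univ.filter (fun x => x ∈ Subgroup.zpowers su)
        with hHFdef
      have hHFcard : HF.card = m := by
        rw [hHFdef, ← Fintype.card_subtype, ← hsuord, ← Fintype.card_zpowers]
      have hsubset : HF ⊆ T := by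
        intro x hx
        rw [hHFdef, Finset.mem_filter] at hx
        rw [hTdef, Finset.mem_filter]
        refine ⟨Finset.mem_univ _, ?_⟩
        obtain ⟨z, rfl⟩ := Subgroup.mem_zpowers_iff.1 hx.2
        rw [← zpow_natCast, ← zpow_mul, mul_comm, zpow_mul, zpow_natCast, hsum1, one_zpow]
      have hHT : HF = T := Finset.eq_of_subset_of_card_le hsubset (le_trans hTcard hHFcard.ge)
      have hauT : au ∈ T := by
        rw [hTdef, Finset.mem_filter]
        exact ⟨Finset.mem_univ _, haum⟩
      have hauHF : au ∈ HF := hHT ▸ hauT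
      rw [hHFdef, Finset.mem_filter] at hauHF
      exact hauHF.2
    obtain ⟨k, hk⟩ := (Submonoid.mem_powers_iff _ _).1
      (((isOfFinOrder_of_finite su).mem_powers_iff_mem_zpowers).2 haumem)
    set j := k % m with hjdef
    have hjm : j < m := Nat.mod_lt _ (Nat.pos_of_ne_zero hm0)
    have hsj : su ^ j = au := by
      rw [hjdef, ← hsuord, pow_mod_orderOf, hk]
    have hmodeq : (s ^ j) % p = a % p := by
      have h12 := congrArg (Units.val) hsj
      rw [Units.val_pow_eq_pow_val, ZMod.coe_unitOfCoprime, ZMod.coe_unitOfCoprime,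
        ← Nat.cast_pow] at h12
      exact (ZMod.natCast_eq_natCast_iff _ _ _).1 h12
    have hdvdint : (p : ℤ) ∣ (a : ℤ) - ((s ^ j : ℕ) : ℤ) := Nat.ModEq.dvd hmodeq
    obtain ⟨c, hc⟩ := hdvdint
    refine ⟨j, hjm, w * β ^ c, mul_ne_zero hw0 (zpow_ne_zero _ hβ), ?_⟩
    have hexp : ((s ^ j : ℕ) : ℤ) + c * p = (a : ℤ) := by linarith [hc]
    calc φ β = w ^ p * β ^ ((a : ℕ) : ℤ) := by rw [hkey, zpow_natCast]
      _ = w ^ p * β ^ (((s ^ j : ℕ) : ℤ) + c * p) := by rw [hexp]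
      _ = w ^ p * (β ^ ((s ^ j : ℕ) : ℤ) * β ^ (c * (p : ℤ))) := by rw [zpow_add₀ hβ]
      _ = β ^ (s ^ j) * (w * β ^ c) ^ p := by
          rw [mul_pow, zpow_natCast, ← zpow_natCast (β ^ c) p, ← zpow_mul]
          ring
  · rintro ⟨j, hj, γ, hγ, hrel⟩
    haveI : Algebra.IsSeparable Φ L := Algebra.IsSeparable.trans Φ F L
    have hiter := aux_iter φ hγ hrel
    set t := s ^ j with ht
    set f' : Polynomial F := ∏ k : ZMod m, (X ^ p - C ((φ ^ (k.val)) β)) with hf'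
    have hφmod : ∀ x y : ℕ, x % m = y % m → (φ : F ≃ₐ[Φ] F) ^ x = φ ^ y := by
      intro x y hxy
      have h1 : ∀ z : ℕ, (φ : F ≃ₐ[Φ] F) ^ z = φ ^ (z % m) := by
        intro z
        conv_lhs => rw [← Nat.div_add_mod z m]
        rw [pow_add, pow_mul, hφm, one_pow, one_mul]
      rw [h1 x, h1 y, hxy]
    have hmap : f'.map (φ : F →+* F) = f' := by
      rw [hf', Polynomial.map_prod]
      have h1 : ∀ k : ZMod m, (X ^ p - C ((φ ^ k.val) β)).map (φ : F →+* F)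
          = X ^ p - C ((φ ^ ((k + 1 : ZMod m)).val) β) := by
        intro k
        rw [Polynomial.map_sub, Polynomial.map_pow, map_X, map_C]
        congr 2
        show φ ((φ ^ k.val) β) = _
        rw [← AlgEquiv.mul_apply, ← pow_succ']
        refine congrFun (congrArg _ (hφmod _ _ ?_)) β
        rw [Nat.mod_eq_of_lt (ZMod.val_lt _), ZMod.val_add, ZMod.val_one_eq_one_mod]
        conv_lhs => rw [Nat.add_mod, Nat.mod_eq_of_lt (ZMod.val_lt k)]
      calc (∏ k : ZMod m, ((X ^ p - C ((φ ^ k.val) β)).map (φ : F →+* F)))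
          = ∏ k : ZMod m, (X ^ p - C ((φ ^ ((k + 1 : ZMod m)).val) β)) := by
            exact Finset.prod_congr rfl (fun k _ => h1 k)
        _ = ∏ k : ZMod m, (X ^ p - C ((φ ^ (k.val)) β)) :=
            Equiv.prod_comp (Equiv.addRight (1 : ZMod m))
              (fun k => X ^ p - C ((φ ^ (k.val)) β))
    have hf'monic : f'.Monic :=
      monic_prod_of_monic _ _ (fun k _ => monic_X_pow_sub_C _ hp.ne_zero)
    have hcoef : ∀ n : ℕ, f'.coeff n ∈ Set.range (algebraMap Φ F) := by
      intro n
      have hfixc : ∀ ψ : F ≃ₐ[Φ] F, ψ (f'.coeff n) = f'.coeff n := by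
        intro ψ
        obtain ⟨z, rfl⟩ := Subgroup.mem_zpowers_iff.1 (hφgen ψ)
        apply aux_fixed_zpow
        have := congrArg (fun q => Polynomial.coeff q n) hmap
        simpa [Polynomial.coeff_map] using this
      exact aux_fixed_mem_range hfixc
    obtain ⟨f, hf⟩ := (Polynomial.mem_lifts _).1 ((Polynomial.lifts_iff_coeff_lifts _).2 hcoef)
    have hroot : ∀ k : ℕ, ∃ ρ : L, ρ ^ p = algebraMap F L ((φ ^ k) β) := by
      intro k
      obtain ⟨d, hd, hk⟩ := hiter k
      refine ⟨η ^ (t ^ k) * algebraMap F L d, ?_⟩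
      rw [mul_pow, ← pow_mul, mul_comm (t ^ k) p, pow_mul, hη, ← map_pow, ← map_pow, ← map_mul, hk]
    have hmapL : f.map (algebraMap Φ L)
        = ∏ k : ZMod m, (X ^ p - C (algebraMap F L ((φ ^ (k.val)) β))) := by
      rw [IsScalarTower.algebraMap_eq Φ F L, ← Polynomial.map_map, hf, hf', Polynomial.map_prod]
      simp [Polynomial.map_sub, Polynomial.map_pow]
    have hsplits : (f.map (algebraMap Φ L)).Splits := by
      rw [hmapL]
      apply Splits.prod
      intro k _
      obtain ⟨ρ, hρ⟩ := hroot k.val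
      exact X_pow_sub_C_splits_of_isPrimitiveRoot hεL hρ
    have hf0 : f ≠ 0 := by
      intro h0
      apply hf'monic.ne_zero
      rw [← hf, h0, Polynomial.map_zero]
    have hηroot : η ∈ f.rootSet L := by
      rw [Polynomial.mem_rootSet]
      refine ⟨hf0, ?_⟩
      rw [aeval_def, ← eval_map, hmapL, eval_prod]
      apply Finset.prod_eq_zero (Finset.mem_univ (0 : ZMod m))
      simp [ZMod.val_zero, hη]
    have hεηroot : algebraMap F L ε * η ∈ f.rootSet L := by
      rw [Polynomial.mem_rootSet]
      refine ⟨hf0, ?_⟩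
      rw [aeval_def, ← eval_map, hmapL, eval_prod]
      apply Finset.prod_eq_zero (Finset.mem_univ (0 : ZMod m))
      simp [ZMod.val_zero, mul_pow, ← map_pow, hε.pow_eq_one, hη]
    set T : IntermediateField Φ L := IntermediateField.adjoin Φ (f.rootSet L) with hT
    have hηT : η ∈ T := IntermediateField.subset_adjoin _ _ hηroot
    have hεηT : algebraMap F L ε * η ∈ T := IntermediateField.subset_adjoin _ _ hεηroot
    have hεT : algebraMap F L ε ∈ T := by
      have := T.mul_mem hεηT (T.inv_mem hηT)
      rwa [mul_assoc, mul_inv_cancel₀ hη0, mul_one] at this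
    have hFT : ∀ x : F, algebraMap F L x ∈ T := by
      intro x
      have h1 : (IntermediateField.adjoin Φ {ε}).map (IsScalarTower.toAlgHom Φ F L) ≤ T := by
        rw [IntermediateField.adjoin_map]
        apply IntermediateField.adjoin_le_iff.2
        simp only [Set.image_singleton, Set.singleton_subset_iff, SetLike.mem_coe]
        exact hεT
      rw [hFgen] at h1
      exact h1 ⟨x, trivial, rfl⟩
    have hTtop : T = ⊤ := by
      let T'' : IntermediateField F L :=
        { T.toSubfield with algebraMap_mem' := hFT }
      have h2 : IntermediateField.adjoin F {η} ≤ T'' := by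
        apply IntermediateField.adjoin_le_iff.2
        simp only [Set.singleton_subset_iff, SetLike.mem_coe]
        exact hηT
      rw [hLgen] at h2
      rw [eq_top_iff]
      intro z _
      exact h2 (trivial : z ∈ (⊤ : IntermediateField F L))
    haveI : IsSplittingField Φ L f := by
      constructor
      · exact hsplits
      · rw [← IntermediateField.adjoin_toSubalgebra_of_isAlgebraic
          (fun x _ => (IsIntegral.of_finite Φ x).isAlgebraic), ← hT, hTtop,
          IntermediateField.top_toSubalgebra]
    haveI : Normal Φ L := Normal.of_isSplittingField f
    exact ⟨⟩
end

section
/- With notation as above (Φ of characteristic ≠ p, Φ_p = Φ(ε_p), Gal(Φ_p/Φ) = ⟨φ⟩ of order m, φ(ε_p) = ε_p^s, V_i the eigenspaces in Φ_p*/Φ_p*^p), let β ∈ Φ_p* \ Φ_p*^p and L = Φ_p(β^{1/p}). Then L/Φ is a cyclic (Galois) extension of degree pm if and only if β ∈ V_1, i.e., φ(β)β^{−s} ∈ Φ_p*^p. -/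
open Polynomial IntermediateField Module

section Aux
variable {Φ F L : Type*} [Field Φ] [Field F] [Field L]
    [Algebra Φ F] [Algebra F L] [Algebra Φ L] [IsScalarTower Φ F L]
set_option linter.unusedSectionVars false

theorem ext_aux16 {η : L} (hηint : IsIntegral F η)
    (hLgen : IntermediateField.adjoin F {η} = ⊤) {f g : L ≃ₐ[Φ] L}
    (hfgη : f η = g η) (hfgF : ∀ a : F, f (algebraMap F L a) = g (algebraMap F L a)) :
    f = g := by
  have hadj : Algebra.adjoin F {η} = ⊤ := by
    have h1 := IntermediateField.adjoin_simple_toSubalgebra_of_isAlgebraic hηint.isAlgebraic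
    rw [hLgen, IntermediateField.top_toSubalgebra] at h1
    exact h1.symm
  set τ : L ≃ₐ[Φ] L := f.trans g.symm with hτ
  have hτF : ∀ a : F, τ (algebraMap F L a) = algebraMap F L a := by
    intro a
    simp only [hτ, AlgEquiv.trans_apply, hfgF a, AlgEquiv.symm_apply_apply]
  have hτη : τ η = η := by
    simp only [hτ, AlgEquiv.trans_apply, hfgη, AlgEquiv.symm_apply_apply]
  let τF : L ≃ₐ[F] L := AlgEquiv.ofRingEquiv (f := τ.toRingEquiv) hτF
  have hτF_eq : (τF : L →ₐ[F] L) = AlgHom.id F L := by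
    apply AlgHom.ext_of_adjoin_eq_top hadj
    intro x hx
    rw [Set.mem_singleton_iff] at hx
    subst hx
    exact hτη
  have hτ_id : ∀ x : L, τ x = x := by
    intro x
    have := congrArg (fun ψ => ψ x) hτF_eq
    exact this
  ext x
  have h2 := hτ_id x
  simp only [hτ, AlgEquiv.trans_apply] at h2
  calc f x = g (g.symm (f x)) := (g.apply_symm_apply _).symm
  _ = g x := by rw [h2]

theorem lift_aux16 (p : ℕ) (hp : p.Prime) {β : F} (hβnp : ∀ γ : F, γ ^ p ≠ β)
    {η : L} (hη : η ^ p = algebraMap F L β)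
    (hLgen : IntermediateField.adjoin F {η} = ⊤) [FiniteDimensional Φ L]
    (ρ : F ≃ₐ[Φ] F) (x : L) (hx : x ^ p = algebraMap F L (ρ β)) :
    ∃ ψ : L ≃ₐ[Φ] L, ψ η = x ∧ ∀ a : F, ψ (algebraMap F L a) = algebraMap F L (ρ a) := by
  have hηint : IsIntegral F η := by
    refine ⟨X ^ p - C β, monic_X_pow_sub_C β hp.ne_zero, ?_⟩
    simp [hη]
  have Hirr : Irreducible (X ^ p - C β) := X_pow_sub_C_irreducible_of_prime hp hβnp
  have haev : Polynomial.aeval η (X ^ p - C β) = 0 := by simp [hη]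
  have hmin : minpoly F η = X ^ p - C β :=
    (minpoly.eq_of_irreducible_of_monic Hirr haev (monic_X_pow_sub_C β hp.ne_zero)).symm
  let e1 : AdjoinRoot (minpoly F η) ≃ₐ[F] F⟮η⟯ := IntermediateField.adjoinRootEquivAdjoin F hηint
  let e2 : F⟮η⟯ ≃ₐ[F] (⊤ : IntermediateField F L) := IntermediateField.equivOfEq hLgen
  let e : AdjoinRoot (minpoly F η) ≃ₐ[F] L := (e1.trans e2).trans IntermediateField.topEquiv
  have he_root : e (AdjoinRoot.root _) = η := by
    simp only [e, AlgEquiv.trans_apply, e1, IntermediateField.adjoinRootEquivAdjoin_apply_root]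
    rfl
  have hev : Polynomial.eval₂ ((algebraMap F L).comp (ρ : F →+* F)) x (minpoly F η) = 0 := by
    rw [hmin]
    simp [hx]
  let ψ0 : AdjoinRoot (minpoly F η) →+* L := AdjoinRoot.lift _ x hev
  let ψr : L →+* L := ψ0.comp (e.symm : L →ₐ[F] AdjoinRoot (minpoly F η)).toRingHom
  have hψη : ψr η = x := by
    have h1 : e.symm η = AdjoinRoot.root _ := by
      rw [AlgEquiv.symm_apply_eq, he_root]
    show ψ0 (e.symm η) = x
    rw [h1]
    exact AdjoinRoot.lift_root hev
  have hψa : ∀ a : F, ψr (algebraMap F L a) = algebraMap F L (ρ a) := by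
    intro a
    have h1 : e.symm (algebraMap F L a) = algebraMap F (AdjoinRoot (minpoly F η)) a := by
      rw [AlgEquiv.symm_apply_eq, AlgEquiv.commutes]
    show ψ0 (e.symm (algebraMap F L a)) = algebraMap F L (ρ a)
    rw [h1, AdjoinRoot.algebraMap_eq]
    exact AdjoinRoot.lift_of hev
  let ψalg : L →ₐ[Φ] L :=
    { toRingHom := ψr
      commutes' := fun c => by
        show ψr (algebraMap Φ L c) = algebraMap Φ L c
        rw [IsScalarTower.algebraMap_apply Φ F L, hψa, AlgEquiv.commutes,
          ← IsScalarTower.algebraMap_apply] }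
  have hinj : Function.Injective ψalg := ψr.injective
  have hsurj : Function.Surjective ψalg := by
    have := (LinearMap.injective_iff_surjective (f := ψalg.toLinearMap)).mp hinj
    exact this
  exact ⟨AlgEquiv.ofBijective ψalg ⟨hinj, hsurj⟩, hψη, hψa⟩

end Aux

theorem stmt_16 {Φ F L : Type*} [Field Φ] [Field F] [Field L]
    [Algebra Φ F] [Algebra F L] [Algebra Φ L] [IsScalarTower Φ F L]
    (p : ℕ) (hp : p.Prime) (hchar : ringChar Φ ≠ p)
    (ε : F) (hε : IsPrimitiveRoot ε p)
    (hFgen : IntermediateField.adjoin Φ {ε} = ⊤)  -- `F = Φ(ε_p)`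
    [IsGalois Φ F] (m : ℕ) (hm : Module.finrank Φ F = m) (hmdvd : m ∣ p - 1)
    (φ : F ≃ₐ[Φ] F) (hφgen : ∀ ψ : F ≃ₐ[Φ] F, ψ ∈ Subgroup.zpowers φ)
    (s : ℕ) (hs : φ ε = ε ^ s)
    (β : F) (hβ : β ≠ 0) (hβnp : ∀ γ : F, γ ^ p ≠ β)
    (η : L) (hη : η ^ p = algebraMap F L β)
    (hLgen : IntermediateField.adjoin F {η} = ⊤)  -- `L = Φ_p(η_p)`
    :
    (IsGalois Φ L ∧ IsCyclic (L ≃ₐ[Φ] L) ∧ Module.finrank Φ L = p * m) ↔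
      ∃ γ : F, γ ≠ 0 ∧ φ β = β ^ s * γ ^ p := by
  haveI : NeZero p := ⟨hp.ne_zero⟩
  haveI : Fact p.Prime := ⟨hp⟩
  have hm0 : m ≠ 0 := by
    rintro rfl
    have h1 : p - 1 = 0 := Nat.eq_zero_of_zero_dvd hmdvd
    have := hp.two_le
    omega
  set e : L := algebraMap F L ε with he_def
  have he : IsPrimitiveRoot e p := hε.map_of_injective (algebraMap F L).injective
  have he0 : e ≠ 0 := fun h => by
    have := he.pow_eq_one
    rw [h, zero_pow hp.ne_zero] at this
    exact zero_ne_one this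
  have hη0 : η ≠ 0 := by
    intro h
    rw [h, zero_pow hp.ne_zero] at hη
    exact hβ ((_root_.map_eq_zero (algebraMap F L)).mp hη.symm)
  have hηint : IsIntegral F η := by
    refine ⟨X ^ p - C β, monic_X_pow_sub_C β hp.ne_zero, ?_⟩
    simp [hη]
  have haev : Polynomial.aeval η (X ^ p - C β) = 0 := by simp [hη]
  have Hirr : Irreducible (X ^ p - C β) := X_pow_sub_C_irreducible_of_prime hp hβnp
  have hmin : minpoly F η = X ^ p - C β :=
    (minpoly.eq_of_irreducible_of_monic Hirr haev (monic_X_pow_sub_C β hp.ne_zero)).symm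
  haveI hFDFL : FiniteDimensional F L := by
    have h1 : FiniteDimensional F (IntermediateField.adjoin F {η}) :=
      IntermediateField.adjoin.finiteDimensional hηint
    rw [hLgen] at h1
    exact IntermediateField.topEquiv.toLinearEquiv.finiteDimensional
  have hrankFL : Module.finrank F L = p := by
    have h1 := IntermediateField.adjoin.finrank hηint
    rw [hLgen, hmin] at h1
    rw [← IntermediateField.finrank_top' (F := F) (E := L), h1, natDegree_X_pow_sub_C]
  haveI hFDΦF : FiniteDimensional Φ F := by
    refine FiniteDimensional.of_finrank_pos ?_
    rw [hm]
    exact Nat.pos_of_ne_zero hm0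
  have hφord : orderOf φ = m := by
    rw [orderOf_eq_card_of_forall_mem_zpowers hφgen,
      IsGalois.card_aut_eq_finrank, hm]
  have hφm1 : φ ^ m = 1 := by rw [← hφord]; exact pow_orderOf_eq_one φ
  constructor
  · rintro ⟨hGal, hCyc, hrankL⟩
    haveI := hGal
    haveI : FiniteDimensional Φ L := by
      refine FiniteDimensional.of_finrank_pos ?_
      rw [hrankL]
      exact Nat.pos_of_ne_zero (Nat.mul_ne_zero hp.ne_zero hm0)
    haveI : Algebra.IsSeparable F L := Algebra.isSeparable_tower_top_of_isSeparable Φ F L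
    haveI : Normal F L := Normal.tower_top_of_normal Φ F L
    haveI : IsGalois F L := ⟨⟩
    -- lift φ to L
    obtain ⟨φt, hφt⟩ := AlgEquiv.restrictNormalHom_surjective (K₁ := F) (E := L) (F := Φ) φ
    have hφtF : ∀ a : F, φt (algebraMap F L a) = algebraMap F L (φ a) := by
      intro a
      have h1 := AlgEquiv.restrictNormal_commutes φt F a
      rw [show φt.restrictNormal F = φ from hφt] at h1
      exact h1.symm
    have hcomm : ∀ a b : L ≃ₐ[Φ] L, a * b = b * a := by
      intro a b
      obtain ⟨g, hg⟩ := hCyc.exists_generator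
      obtain ⟨i, hi⟩ := hg a
      obtain ⟨j, hj⟩ := hg b
      rw [← hi, ← hj, ← zpow_add, ← zpow_add, add_comm]
    -- the element δ
    set x : L := φt η with hx_def
    have hx0 : x ≠ 0 := fun h => hη0 (by simpa [hx_def] using φt.injective (h.trans (map_zero φt).symm))
    set δ : L := x * (η ^ s)⁻¹ with hδ_def
    have hδ0 : δ ≠ 0 := mul_ne_zero hx0 (inv_ne_zero (pow_ne_zero _ hη0))
    have hφte : φt e = e ^ s := by
      rw [he_def, hφtF, hs, map_pow]
    have hfix : ∀ σ : L ≃ₐ[F] L, σ δ = δ := by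
      intro σ
      have hσηp : (σ η * η⁻¹) ^ p = 1 := by
        rw [mul_pow, ← map_pow, hη, AlgEquiv.commutes, ← hη, inv_pow, mul_inv_cancel₀]
        exact pow_ne_zero _ hη0
      obtain ⟨i, _, hi⟩ := he.eq_pow_of_pow_eq_one hσηp
      have hση : σ η = e ^ i * η := by
        rw [hi, inv_mul_cancel_right₀ hη0]
      have hcomm' : σ (φt η) = φt (σ η) := by
        have h1 := hcomm φt (σ.restrictScalars Φ)
        have h2 := congrArg (fun ψ : L ≃ₐ[Φ] L => ψ η) h1
        simpa using h2.symm
      have hσx : σ x = e ^ (s * i) * x := by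
        rw [hx_def, hcomm', hση, map_mul, map_pow, hφte, ← pow_mul]
      rw [hδ_def, map_mul, map_inv₀, map_pow, hση, hσx]
      have hei : (e : L) ^ (s * i) ≠ 0 := pow_ne_zero _ he0
      field_simp
      ring
    -- δ is in F
    have hδF : δ ∈ (⊥ : IntermediateField F L) := by
      have h1 : δ ∈ IntermediateField.fixedField (⊤ : Subgroup (L ≃ₐ[F] L)) := by
        intro g
        exact hfix g.1
      rwa [← IntermediateField.fixingSubgroup_bot (F := F) (E := L),
        IsGalois.fixedField_fixingSubgroup (⊥ : IntermediateField F L)] at h1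
    rw [IntermediateField.mem_bot] at hδF
    obtain ⟨γ, hγδ⟩ := hδF
    refine ⟨γ, ?_, ?_⟩
    · intro h
      rw [h, map_zero] at hγδ
      exact hδ0 hγδ.symm
    · apply (algebraMap F L).injective
      have hxδ : x = δ * η ^ s := by
        rw [hδ_def, inv_mul_cancel_right₀ (pow_ne_zero _ hη0)]
      have h1 : algebraMap F L (φ β) = x ^ p := by
        rw [hx_def, ← map_pow, hη, hφtF]
      rw [h1, hxδ, mul_pow, ← hγδ, ← map_pow, ← pow_mul, mul_comm s p, pow_mul, hη, ← map_pow,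
        map_mul, ← map_mul, mul_comm]
      exact map_mul _ _ _
  · rintro ⟨γ, hγ0, hfb⟩
    classical
    set g : L := algebraMap F L γ with hg_def
    have hg0 : g ≠ 0 := fun h => hγ0 ((_root_.map_eq_zero (algebraMap F L)).mp h)
    haveI : FiniteDimensional Φ L := Module.Finite.trans F L
    have hfrΦL : Module.finrank Φ L = m * p := by
      rw [← Module.finrank_mul_finrank Φ F L, hm, hrankFL]
    have hεmem : ε ∈ primitiveRoots p F := (mem_primitiveRoots hp.pos).mpr hε
    haveI hsplit : IsSplittingField F L (X ^ p - C β) := by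
      have hK' : (primitiveRoots (Module.finrank F L) F).Nonempty := by
        rw [hrankFL]; exact ⟨ε, hεmem⟩
      have ha' : η ^ (Module.finrank F L) = algebraMap F L β := by rw [hrankFL]; exact hη
      have h1 := isSplittingField_X_pow_sub_C_of_root_adjoin_eq_top hK' ha' hLgen
      rwa [hrankFL] at h1
    haveI hGalFL : IsGalois F L := isGalois_of_isSplittingField_X_pow_sub_C ⟨ε, hεmem⟩ Hirr L
    have hcardFL : Fintype.card (L ≃ₐ[F] L) = p := by
      rw [← Nat.card_eq_fintype_card, IsGalois.card_aut_eq_finrank, hrankFL]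
    -- the generator `σ` of `Gal(L/F)`
    set σ : L ≃ₐ[F] L := (autEquivZmod Hirr L hε).symm (Multiplicative.ofAdd (1 : ZMod p))
      with hσ_def
    have hση : σ η = e * η := by
      have h1 := autEquivZmod_symm_apply_natCast Hirr L hη hε 1
      rw [pow_one, Algebra.smul_def, Nat.cast_one] at h1
      rw [hσ_def]
      exact h1
    have hσne : σ ≠ 1 := by
      intro h
      have h2 : σ η = η := by rw [h]; rfl
      rw [hση] at h2
      have h3 : e = 1 := by
        have := h2.trans (one_mul η).symm
        exact mul_right_cancel₀ hη0 this
      exact he.ne_one hp.one_lt h3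
    have hσord : orderOf σ = p := by
      have h1 : orderOf σ ∣ p := by rw [← hcardFL]; exact orderOf_dvd_card
      rcases hp.eq_one_or_self_of_dvd _ h1 with h | h
      · exact absurd (orderOf_eq_one_iff.mp h) hσne
      · exact h
    have hσp : σ ^ p = 1 := by rw [← hσord]; exact pow_orderOf_eq_one σ
    set σ' : L ≃ₐ[Φ] L := σ.restrictScalars Φ with hσ'_def
    have hσ'η : ∀ j : ℕ, (σ' ^ j) η = e ^ j * η := by
      intro j
      induction j with
      | zero => simp
      | succ n ih =>
        rw [pow_succ', AlgEquiv.mul_apply, ih]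
        show σ (e ^ n * η) = e ^ (n + 1) * η
        rw [map_mul, map_pow, hση, he_def, AlgEquiv.commutes]
        ring
    have hσ'F : ∀ (j : ℕ) (a : F), (σ' ^ j) (algebraMap F L a) = algebraMap F L a := by
      intro j a
      induction j with
      | zero => simp
      | succ n ih =>
        rw [pow_succ', AlgEquiv.mul_apply, ih]
        exact σ.commutes a
    have hres : ∀ (j : ℕ) (y : L), (σ' ^ j) y = (σ ^ j) y := by
      intro j
      induction j with
      | zero => intro y; rfl
      | succ n ih =>
        intro y
        rw [pow_succ', pow_succ', AlgEquiv.mul_apply, AlgEquiv.mul_apply, ih]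
        rfl
    have hσ'p : σ' ^ p = 1 := by
      refine ext_aux16 hηint hLgen ?_ ?_
      · rw [hσ'η p, he.pow_eq_one, one_mul]
        rfl
      · intro a
        rw [hσ'F p a]
        rfl
    -- the lift `φt` of `φ`
    have hxγ : (η ^ s * g) ^ p = algebraMap F L (φ β) := by
      rw [mul_pow, ← pow_mul, mul_comm s p, pow_mul, hη, ← map_pow, hg_def, ← map_pow,
        ← map_mul, ← hfb]
    obtain ⟨φt, hφtη, hφtF⟩ := lift_aux16 p hp hβnp hη hLgen φ (η ^ s * g) hxγ
    have hφte : φt e = e ^ s := by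
      rw [he_def, hφtF, hs, map_pow]
    have hcomm : φt * σ' = σ' * φt := by
      refine ext_aux16 hηint hLgen ?_ ?_
      · show φt (σ' η) = σ' (φt η)
        have h1 : σ' η = e * η := hση
        rw [h1, map_mul, hφte, hφtη]
        show _ = σ (η ^ s * g)
        rw [map_mul, map_pow, hση, hg_def, AlgEquiv.commutes, mul_pow]
        ring
      · intro a
        show φt (σ' (algebraMap F L a)) = σ' (φt (algebraMap F L a))
        rw [show σ' (algebraMap F L a) = algebraMap F L a from σ.commutes a, hφtF]
        exact (σ.commutes _).symm
    have hCθσ : Commute φt σ' := hcomm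
    have hφtk : ∀ (k : ℕ) (a : F), (φt ^ k) (algebraMap F L a) = algebraMap F L ((φ ^ k) a) := by
      intro k
      induction k with
      | zero => intro a; rfl
      | succ n ih =>
        intro a
        calc (φt ^ (n + 1)) (algebraMap F L a) = φt ((φt ^ n) (algebraMap F L a)) := by
              rw [pow_succ', AlgEquiv.mul_apply]
        _ = φt (algebraMap F L ((φ ^ n) a)) := by rw [ih]
        _ = algebraMap F L (φ ((φ ^ n) a)) := hφtF _
        _ = algebraMap F L ((φ ^ (n + 1)) a) := by rw [pow_succ', AlgEquiv.mul_apply]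
    have hτ0F : ∀ a : F, (φt ^ m) (algebraMap F L a) = algebraMap F L a := by
      intro a
      rw [hφtk m a, hφm1]
      rfl
    let τF : L ≃ₐ[F] L := AlgEquiv.ofRingEquiv (f := (φt ^ m).toRingEquiv) hτ0F
    have hzp : Subgroup.zpowers σ = ⊤ := by
      apply Subgroup.eq_top_of_card_eq
      rw [Nat.card_zpowers, hσord, Nat.card_eq_fintype_card, hcardFL]
    obtain ⟨c, hc⟩ : ∃ c : ℕ, σ ^ c = τF := by
      have h1 : τF ∈ Subgroup.zpowers σ := by rw [hzp]; trivial
      have h2 : τF ∈ Submonoid.powers σ :=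
        (isOfFinOrder_of_finite σ).mem_powers_iff_mem_zpowers.mpr h1
      exact (Submonoid.mem_powers_iff _ _).mp h2
    have hφtm : φt ^ m = σ' ^ c := by
      apply AlgEquiv.ext
      intro y
      have h2 : (σ ^ c) y = (φt ^ m) y := by rw [hc]; rfl
      rw [hres c y, h2]
    -- choice of the twist `j`
    have hmp : (m : ZMod p) ≠ 0 := by
      rw [Ne, ZMod.natCast_eq_zero_iff]
      intro hdvd
      have h1 : m ≤ p - 1 := Nat.le_of_dvd (by have := hp.two_le; omega) hmdvd
      have h2 : p ≤ m := Nat.le_of_dvd (Nat.pos_of_ne_zero hm0) hdvd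
      have := hp.two_le
      omega
    set j : ℕ := ((1 - (c : ZMod p)) * (m : ZMod p)⁻¹).val with hj_def
    have hj : (c : ZMod p) + (j : ZMod p) * (m : ZMod p) = 1 := by
      rw [hj_def, ZMod.natCast_val, ZMod.cast_id, mul_assoc, inv_mul_cancel₀ hmp, mul_one]
      ring
    set θ : L ≃ₐ[Φ] L := φt * σ' ^ j with hθ_def
    have hθm : θ ^ m = σ' ^ (c + j * m) := by
      rw [hθ_def, (hCθσ.pow_right j).mul_pow, hφtm, ← pow_mul, ← pow_add]
    have hθmne : θ ^ m ≠ 1 := by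
      intro h
      rw [hθm] at h
      have h1 : (σ' ^ (c + j * m)) η = η := by rw [h]; rfl
      rw [hσ'η] at h1
      have h2 : e ^ (c + j * m) = 1 := mul_right_cancel₀ hη0 (h1.trans (one_mul η).symm)
      have h3 : p ∣ c + j * m := (he.pow_eq_one_iff_dvd _).mp h2
      have h4 : ((c + j * m : ℕ) : ZMod p) = 0 := (ZMod.natCast_eq_zero_iff _ _).mpr h3
      rw [Nat.cast_add, Nat.cast_mul, hj] at h4
      exact one_ne_zero h4
    have hθpm : θ ^ (m * p) = 1 := by
      rw [pow_mul, hθm, ← pow_mul, mul_comm (c + j * m) p, pow_mul, hσ'p, one_pow]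
    have hθF : ∀ (k : ℕ) (a : F), (θ ^ k) (algebraMap F L a) = algebraMap F L ((φ ^ k) a) := by
      intro k
      induction k with
      | zero => intro a; rfl
      | succ n ih =>
        intro a
        calc (θ ^ (n + 1)) (algebraMap F L a) = θ ((θ ^ n) (algebraMap F L a)) := by
              rw [pow_succ', AlgEquiv.mul_apply]
        _ = θ (algebraMap F L ((φ ^ n) a)) := by rw [ih]
        _ = algebraMap F L (φ ((φ ^ n) a)) := by
              rw [hθ_def, AlgEquiv.mul_apply, hσ'F j, hφtF]
        _ = algebraMap F L ((φ ^ (n + 1)) a) := by rw [pow_succ', AlgEquiv.mul_apply]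
    have hθk : θ ^ orderOf θ = 1 := pow_orderOf_eq_one θ
    have hkdvd : orderOf θ ∣ m * p := orderOf_dvd_of_pow_eq_one hθpm
    have hmk : m ∣ orderOf θ := by
      have h1 : φ ^ orderOf θ = 1 := by
        apply AlgEquiv.ext
        intro a
        apply (algebraMap F L).injective
        rw [← hθF _ a, hθk]
        rfl
      have h2 := orderOf_dvd_of_pow_eq_one h1
      rwa [hφord] at h2
    have hkm : orderOf θ ≠ m := fun h => hθmne (h ▸ hθk)
    have hkval : orderOf θ = m * p := by
      obtain ⟨t, ht⟩ := hmk
      have ht' : t ∣ p := by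
        have h1 := hkdvd
        rw [ht] at h1
        exact (Nat.mul_dvd_mul_iff_left (Nat.pos_of_ne_zero hm0)).mp h1
      rcases hp.eq_one_or_self_of_dvd t ht' with h | h
      · exact absurd (by rw [ht, h, mul_one]) hkm
      · rw [ht, h]
    have hcard_le : Fintype.card (L ≃ₐ[Φ] L) ≤ m * p := by
      have h1 : Fintype.card (L ≃ₐ[Φ] L) = Fintype.card (L →ₐ[Φ] L) :=
        Fintype.card_congr (algEquivEquivAlgHom Φ L).toEquiv
      rw [h1]
      have h2 := finrank_algHom Φ L
      rwa [Module.finrank_linearMap_self, hfrΦL] at h2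
    have hcard_ge : m * p ≤ Fintype.card (L ≃ₐ[Φ] L) := by
      rw [← hkval]
      exact orderOf_le_card_univ
    have hcard : Fintype.card (L ≃ₐ[Φ] L) = m * p := le_antisymm hcard_le hcard_ge
    haveI hGalΦL : IsGalois Φ L := IsGalois.of_card_aut_eq_finrank Φ L (by rw [Nat.card_eq_fintype_card, hcard, hfrΦL])
    refine ⟨hGalΦL, ?_, by rw [hfrΦL, mul_comm]⟩
    exact isCyclic_of_orderOf_eq_card θ (by rw [Nat.card_eq_fintype_card, hkval, hcard])
end
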